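/- Let k ≥ 2 and let κ be the multiplicative function with κ(p^{uk+v}) = p^{-u-1} for 2 ≤ v ≤ k and κ(p^{uk+1}) = k p^{-u-1/2}. Then uniformly for q ∈ ℕ and A ≥ 1, one has Σ_{1 ≤ a ≤ A} κ(q/(q;a)) ≪ A q^ε κ(q), where (q;a) denotes gcd(q,a) and the implied constant depends only on k and ε. -/

import Mathlib

open Real
open scoped BigOperators

namespace Stmt15Aux

/-- Twice the negative base-`p` exponent of `κ(p^n)` (up to the factor `k` when `k ∣ n - 1`). -/
def E (k : ℕ) (n : ℕ) : ℕ :=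
  if n = 0 then 0 else 2 * ((n - 1) / k) + 2 - (if (n - 1) % k = 0 then 1 else 0)

lemma E_zero (k : ℕ) : E k 0 = 0 := rfl

lemma E_step (k : ℕ) (hk : 2 ≤ k) (n : ℕ) : E k (n + 1) ≤ E k n + 1 := by
  rcases Nat.eq_zero_or_pos n with rfl | hn
  · simp [E, Nat.zero_div, Nat.zero_mod, Nat.zero_le]
  have hk0 : 0 < k := by omega
  set u := (n - 1) / k with hu
  set r := (n - 1) % k with hr
  have hdm : k * u + r = n - 1 := Nat.div_add_mod (n - 1) k
  have hrk : r < k := Nat.mod_lt _ hk0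
  have hcomm : u * k = k * u := Nat.mul_comm u k
  rcases lt_or_ge (r + 1) k with h | h
  · have hn1 : n = (r + 1) + u * k := by omega
    have hdiv : n / k = u := by
      rw [hn1, Nat.add_mul_div_right _ _ hk0, Nat.div_eq_of_lt h, Nat.zero_add]
    have hmod : n % k = r + 1 := by
      rw [hn1, Nat.add_mul_mod_self_right, Nat.mod_eq_of_lt h]
    simp only [E, Nat.add_sub_cancel]
    rw [if_neg (Nat.succ_ne_zero n), hdiv, hmod, if_neg (by omega)]
    split_ifs <;> omega
  · have hrk1 : r + 1 = k := by omega
    have hcomm2 : (u + 1) * k = k * u + k := by ring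
    have hn2 : n = (u + 1) * k := by omega
    have hdiv : n / k = u + 1 := by
      rw [hn2, Nat.mul_div_cancel _ hk0]
    have hmod : n % k = 0 := by
      rw [hn2, Nat.mul_mod_left]
    simp only [E, Nat.add_sub_cancel]
    rw [if_neg (Nat.succ_ne_zero n), hdiv, hmod, if_pos rfl, if_neg (by omega),
      if_neg (by omega)]
    omega

lemma E_add_le (k : ℕ) (hk : 2 ≤ k) (j d : ℕ) : E k (j + d) ≤ E k j + d := by
  induction d with
  | zero => simp
  | succ d ih =>
      calc E k (j + d + 1) ≤ E k (j + d) + 1 := E_step k hk _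
        _ ≤ E k j + d + 1 := by omega

lemma E_le (k : ℕ) (hk : 2 ≤ k) {j m : ℕ} (h : j ≤ m) : E k m ≤ E k j + (m - j) := by
  have := E_add_le k hk j (m - j)
  rwa [Nat.add_sub_cancel' h] at this

section Kappa

variable {k : ℕ} (hk : 2 ≤ k) {κ : ℕ → ℝ}
  (hκ1 : κ 1 = 1)
  (hmul : ∀ m n : ℕ, Nat.Coprime m n → κ (m * n) = κ m * κ n)
  (hκv : ∀ p : ℕ, p.Prime → ∀ u v : ℕ, 2 ≤ v → v ≤ k →
      κ (p ^ (u * k + v)) = (p : ℝ) ^ (-(u : ℝ) - 1))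
  (hκ1' : ∀ p : ℕ, p.Prime → ∀ u : ℕ,
      κ (p ^ (u * k + 1)) = (k : ℝ) * (p : ℝ) ^ (-(u : ℝ) - 1 / 2))

include hk hκv hκ1' in
lemma kappa_pp {p : ℕ} (hp : p.Prime) {n : ℕ} (hn : 1 ≤ n) :
    κ (p ^ n) = if (n - 1) % k = 0
      then (k : ℝ) * (p : ℝ) ^ (-(((n - 1) / k : ℕ) : ℝ) - 1 / 2)
      else (p : ℝ) ^ (-(((n - 1) / k : ℕ) : ℝ) - 1) := by
  have hk0 : 0 < k := by omega
  set u := (n - 1) / k with hu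
  set r := (n - 1) % k with hr
  have hdm : k * u + r = n - 1 := Nat.div_add_mod (n - 1) k
  have hrk : r < k := Nat.mod_lt _ hk0
  have hcomm : u * k = k * u := Nat.mul_comm u k
  have hn1 : n = u * k + (r + 1) := by omega
  split_ifs with h
  · have : n = u * k + 1 := by omega
    rw [this]; exact hκ1' p hp u
  · rw [hn1]; exact hκv p hp u (r + 1) (by omega) (by omega)

include hk hκ1 hκv hκ1' in
lemma kappa_pp_pos {p : ℕ} (hp : p.Prime) (n : ℕ) : 0 < κ (p ^ n) := by
  rcases Nat.eq_zero_or_pos n with rfl | hn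
  · simp [hκ1]
  have hp0 : (0 : ℝ) < p := by exact_mod_cast hp.pos
  rw [kappa_pp hk hκv hκ1' hp hn]
  have hk0 : (0 : ℝ) < k := by exact_mod_cast (by omega : 0 < k)
  split_ifs
  · positivity
  · positivity

include hk hκ1 hκv hκ1' in
lemma kappa_pp_upper {p : ℕ} (hp : p.Prime) (n : ℕ) :
    κ (p ^ n) ≤ (k : ℝ) * (p : ℝ) ^ (-((E k n : ℝ)) / 2) := by
  have hp0 : (0 : ℝ) < p := by exact_mod_cast hp.pos
  have hk1 : (1 : ℝ) ≤ k := by exact_mod_cast (by omega : 1 ≤ k)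
  rcases Nat.eq_zero_or_pos n with rfl | hn
  · have h0 : E k 0 = 0 := rfl
    rw [pow_zero, hκ1, h0]
    simp only [Nat.cast_zero, neg_zero, zero_div, rpow_zero, mul_one]
    linarith
  rw [kappa_pp hk hκv hκ1' hp hn]
  have hEn : E k n = 2 * ((n - 1) / k) + 2 - (if (n - 1) % k = 0 then 1 else 0) := by
    rw [E, if_neg (by omega)]
  split_ifs with h
  · rw [hEn, if_pos h]
    have : ((2 * ((n - 1) / k) + 2 - 1 : ℕ) : ℝ) = 2 * (((n - 1) / k : ℕ) : ℝ) + 1 := by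
      push_cast [Nat.add_sub_cancel]; ring
    rw [this]
    apply le_of_eq; congr 1; ring
  · rw [hEn, if_neg h]
    have : ((2 * ((n - 1) / k) + 2 - 0 : ℕ) : ℝ) = 2 * (((n - 1) / k : ℕ) : ℝ) + 2 := by
      push_cast; ring
    rw [Nat.sub_zero] at this ⊢
    rw [this]
    have he : -(2 * (((n - 1) / k : ℕ) : ℝ) + 2) / 2 = -(((n - 1) / k : ℕ) : ℝ) - 1 := by ring
    rw [he]
    nlinarith [rpow_pos_of_pos hp0 (-(((n - 1) / k : ℕ) : ℝ) - 1)]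

include hk hκ1 hκv hκ1' in
lemma kappa_pp_lower {p : ℕ} (hp : p.Prime) (n : ℕ) :
    (p : ℝ) ^ (-((E k n : ℝ)) / 2) ≤ κ (p ^ n) := by
  have hp0 : (0 : ℝ) < p := by exact_mod_cast hp.pos
  have hk1 : (1 : ℝ) ≤ k := by exact_mod_cast (by omega : 1 ≤ k)
  rcases Nat.eq_zero_or_pos n with rfl | hn
  · have h0 : E k 0 = 0 := rfl
    rw [pow_zero, hκ1, h0]
    simp
  rw [kappa_pp hk hκv hκ1' hp hn]
  have hEn : E k n = 2 * ((n - 1) / k) + 2 - (if (n - 1) % k = 0 then 1 else 0) := by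
    rw [E, if_neg (by omega)]
  split_ifs with h
  · rw [hEn, if_pos h]
    have : ((2 * ((n - 1) / k) + 2 - 1 : ℕ) : ℝ) = 2 * (((n - 1) / k : ℕ) : ℝ) + 1 := by
      push_cast [Nat.add_sub_cancel]; ring
    rw [this]
    have he : -(2 * (((n - 1) / k : ℕ) : ℝ) + 1) / 2 = -(((n - 1) / k : ℕ) : ℝ) - 1 / 2 := by
      ring
    rw [he]
    nlinarith [rpow_pos_of_pos hp0 (-(((n - 1) / k : ℕ) : ℝ) - 1 / 2)]
  · rw [hEn, if_neg h, Nat.sub_zero]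
    have : ((2 * ((n - 1) / k) + 2 : ℕ) : ℝ) = 2 * (((n - 1) / k : ℕ) : ℝ) + 2 := by
      push_cast; ring
    rw [this]
    apply le_of_eq; congr 1; ring

include hk hκ1 hκv hκ1' in
lemma term_bound {p : ℕ} (hp : p.Prime) {j m : ℕ} (hjm : j ≤ m) :
    (p : ℝ) ^ j * κ (p ^ j) ≤
      (k : ℝ) * (p : ℝ) ^ (-(((m - j : ℕ)) : ℝ) / 2) * ((p : ℝ) ^ m * κ (p ^ m)) := by
  have hp0 : (0 : ℝ) < p := by exact_mod_cast hp.pos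
  have hp1 : (1 : ℝ) ≤ p := by exact_mod_cast hp.one_lt.le
  have hk0 : (0 : ℝ) < k := by exact_mod_cast (by omega : 0 < k)
  have hmj : ((m - j : ℕ) : ℝ) = (m : ℝ) - j := by
    push_cast [Nat.cast_sub hjm]; ring
  have hkey : (E k m : ℝ) ≤ (E k j : ℝ) + ((m : ℝ) - j) := by
    have := E_le k hk hjm
    have h2 : ((E k m : ℕ) : ℝ) ≤ ((E k j + (m - j) : ℕ) : ℝ) := by exact_mod_cast this
    rwa [Nat.cast_add, hmj] at h2
  calc (p : ℝ) ^ j * κ (p ^ j)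
      ≤ (p : ℝ) ^ j * ((k : ℝ) * (p : ℝ) ^ (-((E k j : ℝ)) / 2)) := by
        apply mul_le_mul_of_nonneg_left (kappa_pp_upper hk hκ1 hκv hκ1' hp j) (by positivity)
    _ = (k : ℝ) * (p : ℝ) ^ ((j : ℝ) + (-((E k j : ℝ)) / 2)) := by
        rw [rpow_add hp0, rpow_natCast]; ring
    _ ≤ (k : ℝ) * (p : ℝ) ^ ((-(((m - j : ℕ)) : ℝ) / 2) + ((m : ℝ) + (-((E k m : ℝ)) / 2))) := by
        apply mul_le_mul_of_nonneg_left _ hk0.le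
        apply rpow_le_rpow_of_exponent_le hp1
        rw [hmj]; linarith
    _ = (k : ℝ) * (p : ℝ) ^ (-(((m - j : ℕ)) : ℝ) / 2) *
          ((p : ℝ) ^ m * (p : ℝ) ^ (-((E k m : ℝ)) / 2)) := by
        rw [rpow_add hp0, rpow_add hp0, rpow_natCast]; ring
    _ ≤ (k : ℝ) * (p : ℝ) ^ (-(((m - j : ℕ)) : ℝ) / 2) * ((p : ℝ) ^ m * κ (p ^ m)) := by
        apply mul_le_mul_of_nonneg_left _ (by positivity)
        exact mul_le_mul_of_nonneg_left (kappa_pp_lower hk hκ1 hκv hκ1' hp m) (by positivity)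

include hk hκ1 hκv hκ1' in
lemma sum_pp {p : ℕ} (hp : p.Prime) (m : ℕ) :
    ∑ j ∈ Finset.range (m + 1), (p : ℝ) ^ j * κ (p ^ j) ≤
      (1 + 4 * (k : ℝ) * (p : ℝ) ^ (-(1 / 2 : ℝ))) * ((p : ℝ) ^ m * κ (p ^ m)) := by
  have hp0 : (0 : ℝ) < p := by exact_mod_cast hp.pos
  have hp2 : (2 : ℝ) ≤ p := by exact_mod_cast hp.two_le
  have hk0 : (0 : ℝ) < k := by exact_mod_cast (by omega : 0 < k)
  set x : ℝ := (p : ℝ) ^ (-(1 / 2 : ℝ)) with hx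
  have hx0 : 0 ≤ x := (rpow_pos_of_pos hp0 _).le
  have hx34 : x ≤ 3 / 4 := by
    have h1 : ((2 : ℝ)) ^ ((1 / 2 : ℝ)) ≤ (p : ℝ) ^ ((1 / 2 : ℝ)) :=
      rpow_le_rpow (by norm_num) hp2 (by norm_num)
    have h2 : ((2 : ℝ) ^ ((1 / 2 : ℝ))) ^ (2 : ℕ) = 2 := by
      rw [← rpow_natCast (((2 : ℝ)) ^ ((1 / 2 : ℝ))) 2, ← rpow_mul (by norm_num)]
      norm_num
    have h3 : (4 / 3 : ℝ) ≤ (2 : ℝ) ^ ((1 / 2 : ℝ)) := by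
      nlinarith [rpow_pos_of_pos (by norm_num : (0:ℝ) < 2) ((1 / 2 : ℝ))]
    have h4 : (4 / 3 : ℝ) ≤ (p : ℝ) ^ ((1 / 2 : ℝ)) := le_trans h3 h1
    have h5 : x * (p : ℝ) ^ ((1 / 2 : ℝ)) = 1 := by
      rw [hx, ← rpow_add hp0]; norm_num
    nlinarith
  have hxpow : ∀ i : ℕ, x ^ i = (p : ℝ) ^ (-((i : ℕ) : ℝ) / 2) := by
    intro i
    rw [hx, ← rpow_natCast ((p : ℝ) ^ (-(1 / 2 : ℝ))) i, ← rpow_mul hp0.le]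
    congr 1; ring
  set T : ℝ := (p : ℝ) ^ m * κ (p ^ m) with hT
  have hT0 : 0 ≤ T := by
    have hκm : 0 < κ (p ^ m) := kappa_pp_pos hk hκ1 hκv hκ1' hp m
    positivity
  rw [Finset.sum_range_succ]
  have hmain : ∑ j ∈ Finset.range m, (p : ℝ) ^ j * κ (p ^ j) ≤ 4 * k * x * T := by
    calc ∑ j ∈ Finset.range m, (p : ℝ) ^ j * κ (p ^ j)
        ≤ ∑ j ∈ Finset.range m, (k : ℝ) * x ^ (m - j) * T := by
          apply Finset.sum_le_sum
          intro j hj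
          have hjm : j ≤ m := (Finset.mem_range.mp hj).le
          have := term_bound hk hκ1 hκv hκ1' hp hjm
          rwa [← hxpow (m - j)] at this
      _ = (k : ℝ) * T * ∑ j ∈ Finset.range m, x ^ (m - j) := by
          rw [Finset.mul_sum]; apply Finset.sum_congr rfl; intro j hj; ring
      _ = (k : ℝ) * T * ∑ j ∈ Finset.range m, x ^ (j + 1) := by
          congr 1
          rw [← Finset.sum_range_reflect (fun j => x ^ (j + 1)) m]
          apply Finset.sum_congr rfl
          intro j hj
          have : m - 1 - j + 1 = m - j := by
            have := Finset.mem_range.mp hj; omega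
          rw [this]
      _ ≤ (k : ℝ) * T * (4 * x) := by
          apply mul_le_mul_of_nonneg_left _ (by positivity)
          have hgs : (∑ j ∈ Finset.range m, x ^ j) * (x - 1) = x ^ m - 1 := geom_sum_mul x m
          have hs0 : 0 ≤ ∑ j ∈ Finset.range m, x ^ j :=
            Finset.sum_nonneg fun j _ => pow_nonneg hx0 j
          have hxm : 0 ≤ x ^ m := pow_nonneg hx0 m
          have hsum4 : (∑ j ∈ Finset.range m, x ^ j) ≤ 4 := by nlinarith
          calc ∑ j ∈ Finset.range m, x ^ (j + 1) = x * ∑ j ∈ Finset.range m, x ^ j := by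
                rw [Finset.mul_sum]; apply Finset.sum_congr rfl; intro j _; ring
            _ ≤ x * 4 := mul_le_mul_of_nonneg_left hsum4 hx0
            _ = 4 * x := by ring
      _ = 4 * k * x * T := by ring
  calc (∑ j ∈ Finset.range m, (p : ℝ) ^ j * κ (p ^ j)) + (p : ℝ) ^ m * κ (p ^ m)
      ≤ 4 * k * x * T + T := by rw [← hT]; linarith
    _ = (1 + 4 * (k : ℝ) * x) * T := by ring

include hκ1 hmul in
lemma kappa_pos (hppos : ∀ p : ℕ, p.Prime → ∀ n : ℕ, 0 < κ (p ^ n)) :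
    ∀ n : ℕ, n ≠ 0 → 0 < κ n := by
  intro n
  induction n using Nat.recOnPrimePow with
  | zero => intro h; exact absurd rfl h
  | one => intro _; simp [hκ1]
  | prime_pow_mul a p m hp hpa hm ih =>
      intro hne
      have ha : a ≠ 0 := by rintro rfl; simp at hne
      have hco : Nat.Coprime (p ^ m) a := (Nat.Prime.coprime_iff_not_dvd hp).mpr hpa |>.pow_left m
      rw [hmul _ _ hco]
      exact mul_pos (hppos p hp m) (ih ha)

include hκ1 hmul in
lemma divisor_sum_bound
    (hppos : ∀ p : ℕ, p.Prime → ∀ n : ℕ, 0 < κ (p ^ n))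
    (hsum : ∀ p : ℕ, p.Prime → ∀ m : ℕ,
      ∑ j ∈ Finset.range (m + 1), (p : ℝ) ^ j * κ (p ^ j) ≤
        (1 + 4 * (k : ℝ) * (p : ℝ) ^ (-(1 / 2 : ℝ))) * ((p : ℝ) ^ m * κ (p ^ m)))
    {q : ℕ} (hq : q ≠ 0) :
    ∑ d ∈ q.divisors, (d : ℝ) * κ d ≤
      (∏ p ∈ q.primeFactors, (1 + 4 * (k : ℝ) * (p : ℝ) ^ (-(1 / 2 : ℝ)))) *
        ((q : ℝ) * κ q) := by
  classical
  set F : ArithmeticFunction ℝ := ⟨fun n => if n = 0 then 0 else (n : ℝ) * κ n, if_pos rfl⟩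
    with hFdef
  have hFapp : ∀ n : ℕ, n ≠ 0 → F n = (n : ℝ) * κ n := by
    intro n hn; show (if n = 0 then 0 else (n : ℝ) * κ n) = _; rw [if_neg hn]
  have hF : F.IsMultiplicative := by
    rw [ArithmeticFunction.IsMultiplicative.iff_ne_zero]
    constructor
    · rw [hFapp 1 one_ne_zero]; simp [hκ1]
    · intro m n hm hn hco
      rw [hFapp _ (Nat.mul_ne_zero hm hn), hFapp _ hm, hFapp _ hn, hmul _ _ hco]
      push_cast; ring
  have hG : (F * ArithmeticFunction.zeta).IsMultiplicative :=
    hF.mul ArithmeticFunction.isMultiplicative_zeta.natCast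
  have hGsum : ∀ x : ℕ, (F * ArithmeticFunction.zeta) x = ∑ d ∈ x.divisors, F d := fun x =>
    ArithmeticFunction.coe_mul_zeta_apply
  have hGpp : ∀ p : ℕ, p.Prime → ∀ m : ℕ, (F * ArithmeticFunction.zeta) (p ^ m) =
      ∑ j ∈ Finset.range (m + 1), (p : ℝ) ^ j * κ (p ^ j) := by
    intro p hp m
    rw [hGsum, Nat.sum_divisors_prime_pow hp]
    apply Finset.sum_congr rfl
    intro j _
    rw [hFapp _ (pow_ne_zero j hp.pos.ne')]
    push_cast; ring
  have hGfac : (F * ArithmeticFunction.zeta) q =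
      ∏ p ∈ q.primeFactors, (F * ArithmeticFunction.zeta) (p ^ q.factorization p) := by
    rw [hG.multiplicative_factorization _ hq, Finsupp.prod, Nat.support_factorization]
  have hFfac : F q = ∏ p ∈ q.primeFactors, F (p ^ q.factorization p) := by
    rw [hF.multiplicative_factorization _ hq, Finsupp.prod, Nat.support_factorization]
  have hstep : (F * ArithmeticFunction.zeta) q ≤
      (∏ p ∈ q.primeFactors, (1 + 4 * (k : ℝ) * (p : ℝ) ^ (-(1 / 2 : ℝ)))) * F q := by
    rw [hGfac, hFfac, ← Finset.prod_mul_distrib]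
    apply Finset.prod_le_prod
    · intro p hp
      have hpp : p.Prime := Nat.prime_of_mem_primeFactors hp
      rw [hGpp p hpp]
      apply Finset.sum_nonneg
      intro j _
      have := hppos p hpp j
      positivity
    · intro p hp
      have hpp : p.Prime := Nat.prime_of_mem_primeFactors hp
      rw [hGpp p hpp, hFapp _ (pow_ne_zero _ hpp.pos.ne')]
      push_cast
      exact hsum p hpp _
  rw [hGsum q, hFapp q hq] at hstep
  refine le_trans (le_of_eq ?_) hstep
  apply Finset.sum_congr rfl
  intro d hd
  rw [hFapp d (Nat.pos_of_mem_divisors hd).ne']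

end Kappa

end Stmt15Aux

open Stmt15Aux in
/-- For the multiplicative function `κ` of the singular-series analysis one has
`Σ_{1 ≤ a ≤ A} κ(q/(q;a)) ≪ A q^ε κ(q)` uniformly in `q` and `A ≥ 1`. -/
theorem stmt_15 (k : ℕ) (hk : 2 ≤ k) (ε : ℝ) (hε : 0 < ε) (κ : ℕ → ℝ)
    (hκ1 : κ 1 = 1)
    (hmul : ∀ m n : ℕ, Nat.Coprime m n → κ (m * n) = κ m * κ n)
    (hκv : ∀ p : ℕ, p.Prime → ∀ u v : ℕ, 2 ≤ v → v ≤ k →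
      κ (p ^ (u * k + v)) = (p : ℝ) ^ (-(u : ℝ) - 1))
    (hκ1' : ∀ p : ℕ, p.Prime → ∀ u : ℕ,
      κ (p ^ (u * k + 1)) = (k : ℝ) * (p : ℝ) ^ (-(u : ℝ) - 1 / 2)) :
    ∃ C : ℝ, 0 < C ∧ ∀ q : ℕ, 1 ≤ q → ∀ A : ℝ, 1 ≤ A →
      ∑ a ∈ Finset.Icc 1 ⌊A⌋₊, κ (q / Nat.gcd q a)
        ≤ C * A * (q : ℝ) ^ ε * κ q := by
  classical
  have hk0 : (0 : ℝ) < k := by exact_mod_cast (by omega : 0 < k)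
  -- threshold for "large" primes
  have h2ε : (1 : ℝ) < (2 : ℝ) ^ ε := by
    apply Real.one_lt_rpow_iff_of_pos (by norm_num) |>.mpr
    exact Or.inl ⟨by norm_num, hε⟩
  set c : ℝ := (2 : ℝ) ^ ε - 1 with hc
  have hc0 : 0 < c := by simp [hc]; linarith
  set B : ℕ := ⌈(4 * (k : ℝ) / c) ^ 2⌉₊ with hB
  refine ⟨(1 + 4 * (k : ℝ)) ^ B, by positivity, ?_⟩
  intro q hq A hA
  have hq0 : q ≠ 0 := by omega
  have hqR : (0 : ℝ) < q := by exact_mod_cast hq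
  have hppos : ∀ p : ℕ, p.Prime → ∀ n : ℕ, 0 < κ (p ^ n) :=
    fun p hp n => kappa_pp_pos hk hκ1 hκv hκ1' hp n
  have hpos : ∀ n : ℕ, n ≠ 0 → 0 < κ n := kappa_pos hκ1 hmul hppos
  have hsum := fun p hp m => sum_pp hk hκ1 hκv hκ1' (p := p) hp m
  -- Step 1: the counting bound
  set N : ℕ := ⌊A⌋₊ with hN
  have hcount : ∑ a ∈ Finset.Icc 1 N, κ (q / Nat.gcd q a) ≤
      ∑ d ∈ q.divisors, ((N / d : ℕ) : ℝ) * κ (q / d) := by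
    have hIcc : Finset.Icc 1 N = Finset.Ioc 0 N := by
      rw [← Finset.Icc_add_one_left_eq_Ioc, zero_add]
    rw [hIcc]
    have hmaps : ∀ a ∈ Finset.Ioc 0 N, Nat.gcd q a ∈ q.divisors := by
      intro a _
      exact Nat.mem_divisors.mpr ⟨Nat.gcd_dvd_left q a, hq0⟩
    rw [← Finset.sum_fiberwise_of_maps_to hmaps (fun a => κ (q / Nat.gcd q a))]
    apply Finset.sum_le_sum
    intro d hd
    have hdq : d ∣ q := (Nat.mem_divisors.mp hd).1
    have hd0 : d ≠ 0 := by rintro rfl; exact hq0 (Nat.eq_zero_of_zero_dvd hdq)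
    have hqd0 : q / d ≠ 0 := by
      have := Nat.div_pos (Nat.le_of_dvd (by omega) hdq) (by omega)
      omega
    have hκnn : 0 ≤ κ (q / d) := (hpos _ hqd0).le
    calc ∑ a ∈ (Finset.Ioc 0 N).filter (fun a => Nat.gcd q a = d), κ (q / Nat.gcd q a)
        = ∑ _a ∈ (Finset.Ioc 0 N).filter (fun a => Nat.gcd q a = d), κ (q / d) := by
          apply Finset.sum_congr rfl
          intro a ha
          rw [(Finset.mem_filter.mp ha).2]
      _ = (((Finset.Ioc 0 N).filter (fun a => Nat.gcd q a = d)).card : ℝ) * κ (q / d) := by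
          rw [Finset.sum_const, nsmul_eq_mul]
      _ ≤ ((N / d : ℕ) : ℝ) * κ (q / d) := by
          apply mul_le_mul_of_nonneg_right _ hκnn
          have hsub : (Finset.Ioc 0 N).filter (fun a => Nat.gcd q a = d) ⊆
              (Finset.Ioc 0 N).filter (fun a => d ∣ a) := by
            intro a ha
            obtain ⟨ha1, ha2⟩ := Finset.mem_filter.mp ha
            exact Finset.mem_filter.mpr ⟨ha1, ha2 ▸ Nat.gcd_dvd_right q a⟩
          have hcard := Nat.Ioc_filter_dvd_card_eq_div N d
          have := Finset.card_le_card hsub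
          rw [hcard] at this
          exact_mod_cast this
  -- Step 2: convert to the divisor sum of `d ↦ d κ d`
  have hstep2 : ∑ d ∈ q.divisors, ((N / d : ℕ) : ℝ) * κ (q / d) ≤
      (A / q) * ∑ d ∈ q.divisors, (d : ℝ) * κ d := by
    have h1 : ∑ d ∈ q.divisors, ((N / d : ℕ) : ℝ) * κ (q / d) ≤
        ∑ d ∈ q.divisors, (A / q) * (((q / d : ℕ) : ℝ) * κ (q / d)) := by
      apply Finset.sum_le_sum
      intro d hd
      have hdq : d ∣ q := (Nat.mem_divisors.mp hd).1
      have hd0 : d ≠ 0 := by rintro rfl; exact hq0 (Nat.eq_zero_of_zero_dvd hdq)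
      have hdR : (0 : ℝ) < d := by exact_mod_cast Nat.pos_of_ne_zero hd0
      have hqd0 : q / d ≠ 0 := by
        have := Nat.div_pos (Nat.le_of_dvd (by omega) hdq) (by omega)
        omega
      have hκnn : 0 ≤ κ (q / d) := (hpos _ hqd0).le
      have hcast : ((q / d : ℕ) : ℝ) = (q : ℝ) / d := Nat.cast_div hdq (by positivity)
      have hNA : (N : ℝ) ≤ A := Nat.floor_le (by linarith)
      have hle : ((N / d : ℕ) : ℝ) ≤ A / d := by
        calc ((N / d : ℕ) : ℝ) ≤ (N : ℝ) / d := Nat.cast_div_le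
          _ ≤ A / d := by gcongr
      have heq : (A / q) * ((q : ℝ) / d) = A / d := by field_simp
      calc ((N / d : ℕ) : ℝ) * κ (q / d) ≤ (A / d) * κ (q / d) :=
            mul_le_mul_of_nonneg_right hle hκnn
        _ = (A / q) * (((q / d : ℕ) : ℝ) * κ (q / d)) := by rw [hcast, ← heq]; ring
    have h2 : ∑ d ∈ q.divisors, (A / q) * (((q / d : ℕ) : ℝ) * κ (q / d)) =
        (A / q) * ∑ d ∈ q.divisors, (d : ℝ) * κ d := by
      rw [← Finset.mul_sum]
      congr 1
      exact Nat.sum_div_divisors q (fun e => (e : ℝ) * κ e)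
    rw [h2] at h1
    exact h1
  -- Step 3: the product over primes is at most `(1+4k)^B * q^ε`
  have hprod : (∏ p ∈ q.primeFactors, (1 + 4 * (k : ℝ) * (p : ℝ) ^ (-(1 / 2 : ℝ)))) ≤
      (1 + 4 * (k : ℝ)) ^ B * (q : ℝ) ^ ε := by
    have hfnn : ∀ p ∈ q.primeFactors, (0 : ℝ) ≤ 1 + 4 * (k : ℝ) * (p : ℝ) ^ (-(1 / 2 : ℝ)) := by
      intro p hp
      have hpp : p.Prime := Nat.prime_of_mem_primeFactors hp
      have hp0 : (0 : ℝ) < p := by exact_mod_cast hpp.pos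
      positivity
    rw [← Finset.prod_filter_mul_prod_filter_not q.primeFactors (fun p => p < B)]
    have hsmall : ∏ p ∈ q.primeFactors.filter (fun p => p < B),
        (1 + 4 * (k : ℝ) * (p : ℝ) ^ (-(1 / 2 : ℝ))) ≤ (1 + 4 * (k : ℝ)) ^ B := by
      calc ∏ p ∈ q.primeFactors.filter (fun p => p < B),
            (1 + 4 * (k : ℝ) * (p : ℝ) ^ (-(1 / 2 : ℝ)))
          ≤ (1 + 4 * (k : ℝ)) ^ (q.primeFactors.filter (fun p => p < B)).card := by
            rw [← Finset.prod_const]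
            apply Finset.prod_le_prod
            · intro p hp; exact hfnn p (Finset.mem_filter.mp hp).1
            · intro p hp
              have hpp : p.Prime := Nat.prime_of_mem_primeFactors (Finset.mem_filter.mp hp).1
              have hp1 : (1 : ℝ) ≤ p := by exact_mod_cast hpp.one_lt.le
              have hle1 : (p : ℝ) ^ (-(1 / 2 : ℝ)) ≤ 1 :=
                Real.rpow_le_one_of_one_le_of_nonpos hp1 (by norm_num)
              nlinarith
        _ ≤ (1 + 4 * (k : ℝ)) ^ B := by
            apply pow_le_pow_right₀ (by linarith)
            have hsub : q.primeFactors.filter (fun p => p < B) ⊆ Finset.range B := by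
              intro p hp
              exact Finset.mem_range.mpr (Finset.mem_filter.mp hp).2
            calc (q.primeFactors.filter (fun p => p < B)).card ≤ (Finset.range B).card :=
                  Finset.card_le_card hsub
              _ = B := Finset.card_range B
    have hbig : ∏ p ∈ q.primeFactors.filter (fun p => ¬ p < B),
        (1 + 4 * (k : ℝ) * (p : ℝ) ^ (-(1 / 2 : ℝ))) ≤ (q : ℝ) ^ ε := by
      have hterm : ∀ p ∈ q.primeFactors.filter (fun p => ¬ p < B),
          (1 + 4 * (k : ℝ) * (p : ℝ) ^ (-(1 / 2 : ℝ))) ≤ (p : ℝ) ^ ε := by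
        intro p hp
        obtain ⟨hpf, hpB⟩ := Finset.mem_filter.mp hp
        have hpp : p.Prime := Nat.prime_of_mem_primeFactors hpf
        have hp0 : (0 : ℝ) < p := by exact_mod_cast hpp.pos
        have hp2 : (2 : ℝ) ≤ p := by exact_mod_cast hpp.two_le
        have hBp : ((4 * (k : ℝ) / c) ^ 2 : ℝ) ≤ p := by
          calc ((4 * (k : ℝ) / c) ^ 2 : ℝ) ≤ (B : ℕ) := Nat.le_ceil _
            _ ≤ (p : ℝ) := by exact_mod_cast (by omega : B ≤ p)
        have hhalf : 4 * (k : ℝ) / c ≤ (p : ℝ) ^ ((1 / 2 : ℝ)) := by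
          have h0 : (0 : ℝ) ≤ 4 * (k : ℝ) / c := by positivity
          have := Real.rpow_le_rpow (by positivity) hBp (by norm_num : (0:ℝ) ≤ 1/2)
          calc 4 * (k : ℝ) / c = ((4 * (k : ℝ) / c) ^ 2) ^ ((1 / 2 : ℝ)) := by
                rw [← Real.rpow_natCast (4 * (k : ℝ) / c) 2, ← Real.rpow_mul h0]
                norm_num
            _ ≤ (p : ℝ) ^ ((1 / 2 : ℝ)) := this
        have hps : (0 : ℝ) < (p : ℝ) ^ ((1 / 2 : ℝ)) := Real.rpow_pos_of_pos hp0 _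
        have hinv : (p : ℝ) ^ (-(1 / 2 : ℝ)) = ((p : ℝ) ^ ((1 / 2 : ℝ)))⁻¹ := by
          rw [← Real.rpow_neg hp0.le]
        have hmul4 : 4 * (k : ℝ) ≤ c * (p : ℝ) ^ ((1 / 2 : ℝ)) := by
          have := mul_le_mul_of_nonneg_left hhalf hc0.le
          calc 4 * (k : ℝ) = c * (4 * (k : ℝ) / c) := by field_simp
            _ ≤ c * (p : ℝ) ^ ((1 / 2 : ℝ)) := this
        have hsmall2 : 4 * (k : ℝ) * (p : ℝ) ^ (-(1 / 2 : ℝ)) ≤ c := by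
          rw [hinv, mul_inv_le_iff₀ hps]
          linarith [hmul4]
        have h2p : (2 : ℝ) ^ ε ≤ (p : ℝ) ^ ε :=
          Real.rpow_le_rpow (by norm_num) hp2 hε.le
        calc (1 + 4 * (k : ℝ) * (p : ℝ) ^ (-(1 / 2 : ℝ))) ≤ 1 + c := by linarith
          _ = (2 : ℝ) ^ ε := by rw [hc]; ring
          _ ≤ (p : ℝ) ^ ε := h2p
      calc ∏ p ∈ q.primeFactors.filter (fun p => ¬ p < B),
            (1 + 4 * (k : ℝ) * (p : ℝ) ^ (-(1 / 2 : ℝ)))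
          ≤ ∏ p ∈ q.primeFactors.filter (fun p => ¬ p < B), (p : ℝ) ^ ε := by
            apply Finset.prod_le_prod
            · intro p hp; exact hfnn p (Finset.mem_filter.mp hp).1
            · exact hterm
        _ = ((∏ p ∈ q.primeFactors.filter (fun p => ¬ p < B), p : ℕ) : ℝ) ^ ε := by
            rw [Real.finset_prod_rpow _ _ (fun p _ => by positivity) ε]
            norm_num
        _ ≤ (q : ℝ) ^ ε := by
            apply Real.rpow_le_rpow (by positivity) _ hε.le
            have hdvd : (∏ p ∈ q.primeFactors.filter (fun p => ¬ p < B), p) ∣ q := by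
              apply dvd_trans _ (Nat.prod_primeFactors_dvd q)
              exact Finset.prod_dvd_prod_of_subset _ _ _ (Finset.filter_subset _ _)
            exact_mod_cast Nat.le_of_dvd (by omega) hdvd
    have h1 := mul_le_mul hsmall hbig (Finset.prod_nonneg fun p hp =>
      hfnn p (Finset.mem_filter.mp hp).1) (by positivity)
    exact h1
  -- Step 4: assemble
  have hdsb := divisor_sum_bound hκ1 hmul hppos hsum hq0
  have hκq : 0 < κ q := hpos q hq0
  have hAq : 0 ≤ A / q := by positivity
  calc ∑ a ∈ Finset.Icc 1 N, κ (q / Nat.gcd q a)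
      ≤ ∑ d ∈ q.divisors, ((N / d : ℕ) : ℝ) * κ (q / d) := hcount
    _ ≤ (A / q) * ∑ d ∈ q.divisors, (d : ℝ) * κ d := hstep2
    _ ≤ (A / q) * ((∏ p ∈ q.primeFactors, (1 + 4 * (k : ℝ) * (p : ℝ) ^ (-(1 / 2 : ℝ)))) *
          ((q : ℝ) * κ q)) := mul_le_mul_of_nonneg_left hdsb hAq
    _ ≤ (A / q) * (((1 + 4 * (k : ℝ)) ^ B * (q : ℝ) ^ ε) * ((q : ℝ) * κ q)) := by
        apply mul_le_mul_of_nonneg_left _ hAq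
        apply mul_le_mul_of_nonneg_right hprod (by positivity)
    _ = (1 + 4 * (k : ℝ)) ^ B * A * (q : ℝ) ^ ε * κ q := by
        field_simp
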